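/- (Proposition 1.) A VN-EGNN layer is E(3)-equivariant: let (X', H', Z', V') = VN-EGNN(X, H, Z, V) denote the output of one VN-EGNN layer consisting of the three sequential message passing phases (Phase I between physical nodes, Phase II from physical nodes to virtual nodes, Phase III from virtual nodes to physical nodes), with arbitrary message, coordinate-scale, and feature-update functions, under the non-degeneracy assumptions that all pairwise distances appearing in the update formulas are nonzero. Then for every orthogonal matrix R ∈ ℝ^{3×3} and every t ∈ ℝ³, VN-EGNN(R X + t, H, R Z + t, V) = (R X' + t, H', R Z' + t, V'), where R X + t denotes applying x ↦ R x + t to every column of the coordinate matrix. That is, the output coordinates of physical and virtual nodes transform equivariantly under joint roto-translations and reflections of the input coordinates, while the output features are invariant. -/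

import Mathlib

open scoped RealInnerProductSpace


open Matrix

/-- The action of a roto-translation (possibly with reflection): `x ↦ R x + t`. -/
noncomputable def rotoTrans (R : Matrix (Fin 3) (Fin 3) ℝ) (t : EuclideanSpace ℝ (Fin 3))
    (x : EuclideanSpace ℝ (Fin 3)) : EuclideanSpace ℝ (Fin 3) :=
  (show EuclideanSpace ℝ (Fin 3) from WithLp.toLp 2 (R.mulVec x)) + t


noncomputable def mvL (R : Matrix (Fin 3) (Fin 3) ℝ) :
    EuclideanSpace ℝ (Fin 3) →ₗ[ℝ] EuclideanSpace ℝ (Fin 3) where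
  toFun v := (show EuclideanSpace ℝ (Fin 3) from WithLp.toLp 2 (R.mulVec v))
  map_add' x y := by
    ext i
    simp [Matrix.mulVec, dotProduct, PiLp.add_apply, mul_add,
      Finset.sum_add_distrib]
  map_smul' c x := by
    ext i
    simp [Matrix.mulVec, dotProduct, PiLp.smul_apply, Finset.mul_sum,
      mul_left_comm]

lemma mvL_norm {R : Matrix (Fin 3) (Fin 3) ℝ} (hR : Rᵀ * R = 1)
    (v : EuclideanSpace ℝ (Fin 3)) : ‖mvL R v‖ = ‖v‖ := by
  have hsq : ⟪mvL R v, mvL R v⟫ = ⟪v, v⟫ := by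
    have h1 : (R.mulVec v) ⬝ᵥ (R.mulVec v) = v ⬝ᵥ v := by
      rw [Matrix.dotProduct_mulVec, ← Matrix.mulVec_transpose,
        Matrix.mulVec_mulVec, hR, Matrix.one_mulVec]
    simp only [mvL, LinearMap.coe_mk, AddHom.coe_mk, PiLp.inner_apply, RCLike.inner_apply,
      conj_trivial]
    simpa [dotProduct, mul_comm] using h1
  rw [← Real.sqrt_sq (norm_nonneg (mvL R v)), ← Real.sqrt_sq (norm_nonneg v),
    ← real_inner_self_eq_norm_sq, ← real_inner_self_eq_norm_sq, hsq]



lemma rotoTrans_eq (R : Matrix (Fin 3) (Fin 3) ℝ) (t x : EuclideanSpace ℝ (Fin 3)) :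
    rotoTrans R t x = mvL R x + t := rfl

lemma rotoTrans_sub (R : Matrix (Fin 3) (Fin 3) ℝ) (t x y : EuclideanSpace ℝ (Fin 3)) :
    rotoTrans R t x - rotoTrans R t y = mvL R (x - y) := by
  rw [rotoTrans_eq, rotoTrans_eq, map_sub]; abel

lemma rotoTrans_add_im (R : Matrix (Fin 3) (Fin 3) ℝ) (t x w : EuclideanSpace ℝ (Fin 3)) :
    rotoTrans R t x + mvL R w = rotoTrans R t (x + w) := by
  rw [rotoTrans_eq, rotoTrans_eq, map_add]; abel

lemma mvL_sum_comm (R : Matrix (Fin 3) (Fin 3) ℝ) {ι : Type*} (s : Finset ι)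
    (c d : ι → ℝ) (f : ι → EuclideanSpace ℝ (Fin 3)) :
    ∑ j ∈ s, c j • (d j • mvL R (f j)) = mvL R (∑ j ∈ s, c j • (d j • f j)) := by
  rw [map_sum]
  exact Finset.sum_congr rfl fun j _ => by rw [_root_.map_smul, _root_.map_smul]


/-- All data defining a VN-EGNN layer: the neighborhood structure `Nbr` of the graph on
the physical nodes, the coordinate-independent edge features `a` (physical–physical) and
`d` (physical–virtual), and the message, coordinate-scale and feature-update functions of
the three message passing phases. -/
structure VNEGNNLayer (N K D E : ℕ) where
  Nbr : Fin N → Finset (Fin N)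
  a : Fin N → Fin N → ℝ
  d : Fin N → Fin K → ℝ
  φeaa : (Fin D → ℝ) → (Fin D → ℝ) → ℝ → ℝ → (Fin E → ℝ)
  φxaa : (Fin E → ℝ) → ℝ
  φhaa : (Fin D → ℝ) → (Fin E → ℝ) → (Fin D → ℝ)
  φeav : (Fin D → ℝ) → (Fin D → ℝ) → ℝ → ℝ → (Fin E → ℝ)
  φxav : (Fin E → ℝ) → ℝ
  φhav : (Fin D → ℝ) → (Fin E → ℝ) → (Fin D → ℝ)
  φeva : (Fin D → ℝ) → (Fin D → ℝ) → ℝ → ℝ → (Fin E → ℝ)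
  φxva : (Fin E → ℝ) → ℝ
  φhva : (Fin D → ℝ) → (Fin E → ℝ) → (Fin D → ℝ)

namespace VNEGNNLayer

variable {N K D E : ℕ} (P : VNEGNNLayer N K D E)

/-- Phase I intermediate physical node coordinates `x_i^{1/2}`. -/
noncomputable def xHalf (X : Fin N → EuclideanSpace ℝ (Fin 3)) (H : Fin N → Fin D → ℝ) :
    Fin N → EuclideanSpace ℝ (Fin 3) := fun i =>
  X i + ((P.Nbr i).card : ℝ)⁻¹ •
    ∑ j ∈ P.Nbr i, ‖X i - X j‖⁻¹ •
      (P.φxaa (P.φeaa (H i) (H j) (‖X i - X j‖ ^ 2) (P.a i j)) • (X i - X j))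

/-- Phase I intermediate physical node features `h_i^{1/2}`. -/
noncomputable def hHalf (X : Fin N → EuclideanSpace ℝ (Fin 3)) (H : Fin N → Fin D → ℝ) :
    Fin N → Fin D → ℝ := fun i =>
  H i + P.φhaa (H i) (((P.Nbr i).card : ℝ)⁻¹ •
    ∑ j ∈ P.Nbr i, P.φeaa (H i) (H j) (‖X i - X j‖ ^ 2) (P.a i j))

/-- Phase II updated virtual node coordinates `z_j'`. -/
noncomputable def zOut (X : Fin N → EuclideanSpace ℝ (Fin 3)) (H : Fin N → Fin D → ℝ)
    (Z : Fin K → EuclideanSpace ℝ (Fin 3)) (V : Fin K → Fin D → ℝ) :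
    Fin K → EuclideanSpace ℝ (Fin 3) := fun j =>
  Z j + (N : ℝ)⁻¹ •
    ∑ i, ‖P.xHalf X H i - Z j‖⁻¹ •
      (P.φxav (P.φeav (P.hHalf X H i) (V j) (‖P.xHalf X H i - Z j‖ ^ 2) (P.d i j)) •
        (P.xHalf X H i - Z j))

/-- Phase II updated virtual node features `v_j'`. -/
noncomputable def vOut (X : Fin N → EuclideanSpace ℝ (Fin 3)) (H : Fin N → Fin D → ℝ)
    (Z : Fin K → EuclideanSpace ℝ (Fin 3)) (V : Fin K → Fin D → ℝ) :
    Fin K → Fin D → ℝ := fun j =>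
  V j + P.φhav (V j) ((N : ℝ)⁻¹ •
    ∑ i, P.φeav (P.hHalf X H i) (V j) (‖P.xHalf X H i - Z j‖ ^ 2) (P.d i j))

/-- Phase III updated physical node coordinates `x_j'`. -/
noncomputable def xOut (X : Fin N → EuclideanSpace ℝ (Fin 3)) (H : Fin N → Fin D → ℝ)
    (Z : Fin K → EuclideanSpace ℝ (Fin 3)) (V : Fin K → Fin D → ℝ) :
    Fin N → EuclideanSpace ℝ (Fin 3) := fun j =>
  P.xHalf X H j + (K : ℝ)⁻¹ •
    ∑ i, ‖P.zOut X H Z V i - P.xHalf X H j‖⁻¹ •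
      (P.φxva (P.φeva (P.vOut X H Z V i) (P.hHalf X H j)
          (‖P.zOut X H Z V i - P.xHalf X H j‖ ^ 2) (P.d j i)) •
        (P.zOut X H Z V i - P.xHalf X H j))

/-- Phase III updated physical node features `h_j'`. -/
noncomputable def hOut (X : Fin N → EuclideanSpace ℝ (Fin 3)) (H : Fin N → Fin D → ℝ)
    (Z : Fin K → EuclideanSpace ℝ (Fin 3)) (V : Fin K → Fin D → ℝ) :
    Fin N → Fin D → ℝ := fun j =>
  P.hHalf X H j + P.φhva (P.hHalf X H j) ((K : ℝ)⁻¹ •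
    ∑ i, P.φeva (P.vOut X H Z V i) (P.hHalf X H j)
      (‖P.zOut X H Z V i - P.xHalf X H j‖ ^ 2) (P.d j i))

/-- One full VN-EGNN layer `(X, H, Z, V) ↦ (X', H', Z', V')`. -/
noncomputable def layer (X : Fin N → EuclideanSpace ℝ (Fin 3)) (H : Fin N → Fin D → ℝ)
    (Z : Fin K → EuclideanSpace ℝ (Fin 3)) (V : Fin K → Fin D → ℝ) :
    (Fin N → EuclideanSpace ℝ (Fin 3)) × (Fin N → Fin D → ℝ) ×
      (Fin K → EuclideanSpace ℝ (Fin 3)) × (Fin K → Fin D → ℝ) :=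
  (P.xOut X H Z V, P.hOut X H Z V, P.zOut X H Z V, P.vOut X H Z V)

end VNEGNNLayer

/-- **Proposition 1.** A VN-EGNN layer is E(3)-equivariant: under the non-degeneracy
assumptions that all pairwise distances appearing in the update formulas are nonzero,
jointly roto-translating (with possible reflection) the input physical and virtual node
coordinates by an orthogonal matrix `R` and a translation `t` roto-translates the output
coordinates by the same `R` and `t` and leaves the output features invariant. -/
theorem vnegnn_layer_equivariant {N K D E : ℕ} (P : VNEGNNLayer N K D E)
    (X : Fin N → EuclideanSpace ℝ (Fin 3)) (H : Fin N → Fin D → ℝ)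
    (Z : Fin K → EuclideanSpace ℝ (Fin 3)) (V : Fin K → Fin D → ℝ)
    (hnd1 : ∀ i, ∀ j ∈ P.Nbr i, X i ≠ X j)
    (hnd2 : ∀ i j, P.xHalf X H i ≠ Z j)
    (hnd3 : ∀ i j, P.zOut X H Z V i ≠ P.xHalf X H j)
    (R : Matrix (Fin 3) (Fin 3) ℝ) (hR : Rᵀ * R = 1) (t : EuclideanSpace ℝ (Fin 3)) :
    P.layer (fun i => rotoTrans R t (X i)) H (fun k => rotoTrans R t (Z k)) V =
      (fun i => rotoTrans R t ((P.layer X H Z V).1 i),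
        (P.layer X H Z V).2.1,
        fun k => rotoTrans R t ((P.layer X H Z V).2.2.1 k),
        (P.layer X H Z V).2.2.2) := by
  set X' : Fin N → EuclideanSpace ℝ (Fin 3) := fun i => rotoTrans R t (X i) with hX'
  set Z' : Fin K → EuclideanSpace ℝ (Fin 3) := fun k => rotoTrans R t (Z k) with hZ'
  have hnorm : ∀ x y : EuclideanSpace ℝ (Fin 3),
      ‖rotoTrans R t x - rotoTrans R t y‖ = ‖x - y‖ := fun x y => by
    rw [rotoTrans_sub, mvL_norm hR]
  -- Phase I
  have hxHalf : P.xHalf X' H = fun i => rotoTrans R t (P.xHalf X H i) := by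
    funext i
    simp only [VNEGNNLayer.xHalf, hX', rotoTrans_sub, mvL_norm hR]
    rw [mvL_sum_comm, ← _root_.map_smul, rotoTrans_add_im]
  have hhHalf : P.hHalf X' H = P.hHalf X H := by
    funext i
    simp only [VNEGNNLayer.hHalf, hX', rotoTrans_sub, mvL_norm hR]
  -- Phase II
  have hzOut : P.zOut X' H Z' V = fun j => rotoTrans R t (P.zOut X H Z V j) := by
    funext j
    simp only [VNEGNNLayer.zOut, hxHalf, hhHalf, hZ', rotoTrans_sub, mvL_norm hR]
    rw [mvL_sum_comm, ← _root_.map_smul, rotoTrans_add_im]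
  have hvOut : P.vOut X' H Z' V = P.vOut X H Z V := by
    funext j
    simp only [VNEGNNLayer.vOut, hxHalf, hhHalf, hZ', rotoTrans_sub, mvL_norm hR]
  -- Phase III
  have hxOut : P.xOut X' H Z' V = fun j => rotoTrans R t (P.xOut X H Z V j) := by
    funext j
    simp only [VNEGNNLayer.xOut, hxHalf, hhHalf, hzOut, hvOut, rotoTrans_sub, mvL_norm hR]
    rw [mvL_sum_comm, ← _root_.map_smul, rotoTrans_add_im]
  have hhOut : P.hOut X' H Z' V = P.hOut X H Z V := by
    funext j
    simp only [VNEGNNLayer.hOut, hxHalf, hhHalf, hzOut, hvOut, rotoTrans_sub, mvL_norm hR]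
  simp only [VNEGNNLayer.layer, hxOut, hhOut, hzOut, hvOut]
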